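/- Let f be a homogeneous polynomial of degree k in x_1,...,x_n over the rationals, and define its divided symmetrization ⟨f⟩_n = Σ_{w∈S_n} w·(f / Π_{i=1}^{n-1}(x_i − x_{i+1})), where w acts by permuting variables. If k < n−1, then ⟨f⟩_n = 0. -/

import Mathlib

open MvPolynomial

/-- The denominator `∏_{i=1}^{n-1} (x_i - x_{i+1})` of divided symmetrization. -/
noncomputable def denomDS (n : ℕ) : MvPolynomial (Fin n) ℚ :=
  ∏ i : Fin (n - 1),
    (X (⟨i.1, by have := i.isLt; omega⟩ : Fin n) - X ⟨i.1 + 1, by have := i.isLt; omega⟩)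

/-- Divided symmetrization `⟨f⟩_n = Σ_{w ∈ S_n} w·(f / ∏ (x_i - x_{i+1}))`, as an element of
the fraction field of `ℚ[x_1,...,x_n]`. -/
noncomputable def DS (n : ℕ) (f : MvPolynomial (Fin n) ℚ) :
    FractionRing (MvPolynomial (Fin n) ℚ) :=
  ∑ w : Equiv.Perm (Fin n),
    algebraMap (MvPolynomial (Fin n) ℚ) _ (rename w f) /
      algebraMap (MvPolynomial (Fin n) ℚ) _ (rename w (denomDS n))


section Aux
open Finset
variable (n : ℕ)

noncomputable def Vd : MvPolynomial (Fin n) ℚ :=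
  ∏ i : Fin n, ∏ j ∈ Finset.Ioi i, (X j - X i)

noncomputable def Epoly : MvPolynomial (Fin n) ℚ :=
  ∏ i : Fin n, ∏ j ∈ (Finset.Ioi i).filter (fun j => ¬ j.1 = i.1 + 1), (X j - X i)

noncomputable def Dpoly : MvPolynomial (Fin n) ℚ :=
  ∏ i : Fin n, ∏ j ∈ (Finset.Ioi i).filter (fun j => j.1 = i.1 + 1), (X j - X i)

lemma X_sub_X_ne {i j : Fin n} (h : j ≠ i) : (X j - X i : MvPolynomial (Fin n) ℚ) ≠ 0 := by
  rw [sub_ne_zero]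
  exact fun he => h (MvPolynomial.X_injective he)

lemma Vd_eq_mul : Vd n = Dpoly n * Epoly n := by
  rw [Vd, Dpoly, Epoly, ← Finset.prod_mul_distrib]
  exact Finset.prod_congr rfl fun i _ => (Finset.prod_filter_mul_prod_filter_not _ _ _).symm

lemma Vd_ne_zero : Vd n ≠ 0 := by
  apply Finset.prod_ne_zero_iff.2
  intro i _
  apply Finset.prod_ne_zero_iff.2
  intro j hj
  exact X_sub_X_ne n (Finset.mem_Ioi.1 hj).ne'

lemma Epoly_ne_zero : Epoly n ≠ 0 := by
  apply Finset.prod_ne_zero_iff.2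
  intro i _
  apply Finset.prod_ne_zero_iff.2
  intro j hj
  exact X_sub_X_ne n (Finset.mem_Ioi.1 (Finset.mem_filter.1 hj).1).ne'

lemma denomDS_ne_zero : denomDS n ≠ 0 := by
  apply Finset.prod_ne_zero_iff.2
  intro i _
  apply X_sub_X_ne
  simp [Fin.ext_iff]

lemma Dpoly_eq (m : ℕ) (hn : n = m + 1) :
    Dpoly n = (-1 : MvPolynomial (Fin n) ℚ) ^ (n - 1) * denomDS n := by
  subst hn
  have h1 : Dpoly (m+1) = ∏ i : Fin (m+1),
      (if h : i.1 + 1 < m + 1 then (X ⟨i.1+1, h⟩ - X i) else 1) := by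
    rw [Dpoly]
    apply Finset.prod_congr rfl
    intro i _
    by_cases h : i.1 + 1 < m + 1
    · rw [dif_pos h]
      have : (Finset.Ioi i).filter (fun j => j.1 = i.1 + 1) = {(⟨i.1+1, h⟩ : Fin (m+1))} := by
        ext j
        simp only [Finset.mem_filter, Finset.mem_Ioi, Finset.mem_singleton, Fin.lt_def,
          Fin.ext_iff]
        omega
      rw [this, Finset.prod_singleton]
    · rw [dif_neg h]
      have : (Finset.Ioi i).filter (fun j => j.1 = i.1 + 1) = ∅ := by
        ext j
        simp only [Finset.mem_filter, Finset.mem_Ioi, Finset.notMem_empty, iff_false, not_and,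
          Fin.lt_def]
        have := j.isLt
        omega
      rw [this, Finset.prod_empty]
  rw [h1, Fin.prod_univ_castSucc]
  rw [dif_neg (by simp)]
  rw [mul_one]
  have h2 : denomDS (m+1) = ∏ i : Fin m,
      (X (⟨i.1, by omega⟩ : Fin (m+1)) - X ⟨i.1 + 1, by omega⟩) := by
    rw [denomDS]
    exact Finset.prod_congr rfl fun i _ => rfl
  rw [h2]
  have h3 : ∀ i : Fin m, (if h : (i.castSucc).1 + 1 < m + 1 then
      (X ⟨(i.castSucc).1 + 1, h⟩ - X i.castSucc : MvPolynomial (Fin (m+1)) ℚ) else 1) =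
      (-1) * (X (⟨i.1, by have := i.isLt; omega⟩ : Fin (m+1)) -
        X ⟨i.1 + 1, by have := i.isLt; omega⟩) := by
    intro i
    rw [dif_pos (by rw [Fin.coe_castSucc]; exact Nat.succ_lt_succ i.isLt : (i.castSucc).1 + 1 < m + 1), neg_one_mul, neg_sub]
    rfl
  rw [Finset.prod_congr rfl (fun i _ => h3 i), Finset.prod_mul_distrib, Finset.prod_const,
    Finset.card_univ, Fintype.card_fin]
  rfl

lemma rename_Vd (σ : Equiv.Perm (Fin n)) :
    rename σ (Vd n) = ((Equiv.Perm.sign σ : ℤ) : MvPolynomial (Fin n) ℚ) * Vd n := by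
  have h0 : Vd n = (Matrix.vandermonde fun i : Fin n => (X i : MvPolynomial (Fin n) ℚ)).det := by
    rw [Matrix.det_vandermonde, Vd]
  rw [h0, AlgHom.map_det]
  have h1 : (Matrix.vandermonde fun i : Fin n => (X i : MvPolynomial (Fin n) ℚ)).map
      (rename (σ : Fin n → Fin n)) =
      (Matrix.vandermonde fun i : Fin n => (X (σ i) : MvPolynomial (Fin n) ℚ)) := by
    ext i j
    simp [Matrix.vandermonde_apply, Matrix.map_apply]
  have h2 : (Matrix.vandermonde fun i : Fin n => (X (σ i) : MvPolynomial (Fin n) ℚ)) =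
      (Matrix.vandermonde fun i : Fin n => (X i : MvPolynomial (Fin n) ℚ)).submatrix σ id := by
    ext i j
    simp [Matrix.vandermonde_apply, Matrix.submatrix_apply]
  rw [AlgHom.mapMatrix_apply, h1, h2, Matrix.det_permute]

lemma denom_homog : (denomDS n).IsHomogeneous (n - 1) := by
  have := IsHomogeneous.prod Finset.univ
    (fun i : Fin (n-1) => (X (⟨i.1, by have := i.isLt; omega⟩ : Fin n) -
      X ⟨i.1 + 1, by have := i.isLt; omega⟩ : MvPolynomial (Fin n) ℚ)) (fun _ => 1)
    (fun i _ => (isHomogeneous_X ℚ _).sub (isHomogeneous_X ℚ _))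
  simp at this; exact this

noncomputable def mE : ℕ := ∑ i : Fin n, ((Finset.Ioi i).filter (fun j => ¬ j.1 = i.1 + 1)).card

lemma Epoly_homog : (Epoly n).IsHomogeneous (mE n) := by
  apply IsHomogeneous.prod
  intro i _
  have := IsHomogeneous.prod ((Finset.Ioi i).filter (fun j => ¬ j.1 = i.1 + 1))
    (fun j => (X j - X i : MvPolynomial (Fin n) ℚ)) (fun _ => 1)
    (fun j _ => (isHomogeneous_X ℚ _).sub (isHomogeneous_X ℚ _))
  simpa using this

lemma Vd_homog : (Vd n).IsHomogeneous (∑ i : Fin n, (Finset.Ioi i).card) := by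
  apply IsHomogeneous.prod
  intro i _
  have := IsHomogeneous.prod (Finset.Ioi i)
    (fun j => (X j - X i : MvPolynomial (Fin n) ℚ)) (fun _ => 1)
    (fun j _ => (isHomogeneous_X ℚ _).sub (isHomogeneous_X ℚ _))
  simpa using this

lemma Dpoly_homog (m : ℕ) (hn : n = m + 1) : (Dpoly n).IsHomogeneous (n - 1) := by
  rw [Dpoly_eq n m hn]
  have h : ((-1 : MvPolynomial (Fin n) ℚ)) ^ (n-1) = C ((-1 : ℚ) ^ (n-1)) := by
    simp
  rw [h]
  simpa using (isHomogeneous_C (Fin n) ((-1 : ℚ) ^ (n-1))).mul (denom_homog n)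

lemma key_deg (m : ℕ) (hn : n = m + 1) : (n - 1) + mE n = ∑ i ∈ Finset.range n, i := by
  have h1 : (Vd n).IsHomogeneous ((n - 1) + mE n) := by
    rw [Vd_eq_mul]
    exact (Dpoly_homog n m hn).mul (Epoly_homog n)
  have h2 := Vd_homog n
  have h3 := h1.inj_right h2 (Vd_ne_zero n)
  rw [h3]
  have h4 : ∀ i : Fin n, (Finset.Ioi i).card = n - 1 - i.1 := fun i => Fin.card_Ioi i
  calc ∑ i : Fin n, (Finset.Ioi i).card = ∑ i : Fin n, (n - 1 - i.1) :=
        Finset.sum_congr rfl fun i _ => h4 i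
    _ = ∑ i ∈ Finset.range n, (n - 1 - i) := Fin.sum_univ_eq_sum_range _ n
    _ = ∑ i ∈ Finset.range n, i := Finset.sum_range_reflect (fun i => i) n

lemma sum_distinct_ge {n : ℕ} {a : Fin n → ℕ} (ha : Function.Injective a) :
    ∑ i ∈ Finset.range n, i ≤ ∑ i : Fin n, a i := by
  set S : Finset ℕ := Finset.image a Finset.univ with hS
  have hcard : S.card = n := by
    rw [hS, Finset.card_image_of_injective _ ha, Finset.card_univ, Fintype.card_fin]
  set e := S.orderIsoOfFin hcard with he
  have hmono : StrictMono (fun i : Fin n => ((e i : ℕ))) := fun i j h =>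
    Subtype.coe_lt_coe.2 (e.strictMono h)
  have key : ∀ p, ∀ h : p < n, p ≤ (e ⟨p, h⟩ : ℕ) := by
    intro p
    induction p with
    | zero => intro h; exact Nat.zero_le _
    | succ q ih =>
      intro h
      have h1 : q < n := Nat.lt_of_succ_lt h
      have h2 : (e ⟨q, h1⟩ : ℕ) < (e ⟨q+1, h⟩ : ℕ) := hmono (by simp [Fin.lt_def])
      have := ih h1
      omega
  have hle : ∀ i : Fin n, i.1 ≤ (e i : ℕ) := fun i => key i.1 i.2
  calc ∑ i ∈ Finset.range n, i = ∑ i : Fin n, i.1 := (Fin.sum_univ_eq_sum_range _ n).symm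
    _ ≤ ∑ i : Fin n, (e i : ℕ) := Finset.sum_le_sum fun i _ => hle i
    _ = ∑ x ∈ S, x := by
      rw [← Finset.sum_coe_sort S (fun x => (x : ℕ))]
      exact Fintype.sum_equiv e.toEquiv _ _ (fun i => rfl)
    _ = ∑ i : Fin n, a i := by
      rw [hS, Finset.sum_image (fun x _ y _ h => ha h)]

noncomputable def Npoly (f : MvPolynomial (Fin n) ℚ) : MvPolynomial (Fin n) ℚ :=
  ∑ w : Equiv.Perm (Fin n),
    ((Equiv.Perm.sign w : ℤ) : MvPolynomial (Fin n) ℚ) * rename (⇑w) (f * Epoly n)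

lemma intCast_eq_C (z : ℤ) : ((z : ℤ) : MvPolynomial (Fin n) ℚ) = C ((z : ℤ) : ℚ) := by
  simp

lemma Npoly_homog (f : MvPolynomial (Fin n) ℚ) (k : ℕ) (hf : f.IsHomogeneous k) :
    (Npoly n f).IsHomogeneous (k + mE n) := by
  apply IsHomogeneous.sum
  intro w _
  have h1 : (rename (⇑w) (f * Epoly n)).IsHomogeneous (k + mE n) :=
    (hf.mul (Epoly_homog n)).rename_isHomogeneous
  rw [intCast_eq_C]
  simpa using (isHomogeneous_C (Fin n) ((Equiv.Perm.sign w : ℤ) : ℚ)).mul h1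

lemma rename_Npoly_swap (f : MvPolynomial (Fin n) ℚ) {i j : Fin n} (hij : i ≠ j) :
    rename (⇑(Equiv.swap i j)) (Npoly n f) = - Npoly n f := by
  set τ := Equiv.swap i j with hτ
  rw [Npoly, map_sum]
  have step : ∀ w : Equiv.Perm (Fin n),
      rename (⇑τ) (((Equiv.Perm.sign w : ℤ) : MvPolynomial (Fin n) ℚ) *
        rename (⇑w) (f * Epoly n)) =
      ((Equiv.Perm.sign w : ℤ) : MvPolynomial (Fin n) ℚ) *
        rename (⇑(τ * w)) (f * Epoly n) := by
    intro w
    rw [map_mul, map_intCast, rename_rename, ← Equiv.Perm.coe_mul]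
  rw [Finset.sum_congr rfl fun w _ => step w]
  have reindex : ∑ w : Equiv.Perm (Fin n),
      ((Equiv.Perm.sign w : ℤ) : MvPolynomial (Fin n) ℚ) * rename (⇑(τ * w)) (f * Epoly n) =
      ∑ u : Equiv.Perm (Fin n),
      ((Equiv.Perm.sign (τ⁻¹ * u) : ℤ) : MvPolynomial (Fin n) ℚ) * rename (⇑u) (f * Epoly n) := by
    apply Fintype.sum_equiv (Equiv.mulLeft τ)
    intro w
    simp
  rw [reindex]
  simp only [Npoly, ← Finset.sum_neg_distrib]
  apply Finset.sum_congr rfl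
  intro u _
  have hsign : Equiv.Perm.sign (τ⁻¹ * u) = - Equiv.Perm.sign u := by
    rw [map_mul, map_inv, hτ, Equiv.Perm.sign_swap hij]
    simp
  rw [hsign]
  push_cast
  ring

lemma Npoly_coeff_zero_of_eq (f : MvPolynomial (Fin n) ℚ) {i j : Fin n} (hij : i ≠ j)
    (d : Fin n →₀ ℕ) (hd : d i = d j) : coeff d (Npoly n f) = 0 := by
  set τ := Equiv.swap i j with hτ
  have hmd : Finsupp.mapDomain (⇑τ) d = d := by
    ext a
    rw [show (⇑τ : Fin n → Fin n) = ⇑(τ : Equiv.Perm (Fin n)) from rfl,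
      Finsupp.mapDomain_equiv_apply]
    rcases eq_or_ne a i with rfl | hai
    · simp [hτ, Equiv.swap_apply_def, hd.symm]
    rcases eq_or_ne a j with rfl | haj
    · simp [hτ, Equiv.swap_apply_def, hd]
    · simp [hτ, Equiv.swap_apply_of_ne_of_ne hai haj]
  have hcr := coeff_rename_mapDomain (⇑τ) (Equiv.injective τ) (Npoly n f) d
  rw [rename_Npoly_swap n f hij, hmd, coeff_neg] at hcr
  linarith [hcr]

lemma Npoly_eq_zero (f : MvPolynomial (Fin n) ℚ) (k m : ℕ) (hf : f.IsHomogeneous k)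
    (hk : k < n - 1) (hn : n = m + 1) : Npoly n f = 0 := by
  rw [eq_zero_iff]
  intro d
  by_cases hinj : Function.Injective (fun i : Fin n => d i)
  · by_contra hc
    have hdeg := Npoly_homog n f k hf hc
    have hdeg' : ∑ i : Fin n, d i = k + mE n := by
      rw [show Finsupp.weight (1 : Fin n → ℕ) d = Finsupp.degree d from
        (DFunLike.congr_fun Finsupp.degree_eq_weight_one d).symm] at hdeg
      rw [← hdeg, Finsupp.degree_apply]
      exact (Finset.sum_subset (Finset.subset_univ _)
        (fun x _ hx => Finsupp.notMem_support_iff.1 hx)).symm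
    have hge := sum_distinct_ge hinj
    have hkey := key_deg n m hn
    omega
  · rw [Function.not_injective_iff] at hinj
    obtain ⟨i, j, hdij, hij⟩ := hinj
    exact Npoly_coeff_zero_of_eq n f hij d hdij

lemma aux_div {K : Type*} [Field K] {u x v : K} (hu : u * u = 1) :
    x / (u * v) = (u * x) / v := by
  simp only [div_eq_mul_inv, mul_inv]
  rw [← eq_inv_of_mul_eq_one_left hu]
  ring

lemma denom_mul_Epoly (m : ℕ) (hn : n = m + 1) :
    denomDS n * Epoly n = ((-1 : ℤ) ^ (n - 1) : MvPolynomial (Fin n) ℚ) * Vd n := by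
  have h1 := Dpoly_eq n m hn
  have h2 : denomDS n = ((-1 : MvPolynomial (Fin n) ℚ)) ^ (n - 1) * Dpoly n := by
    rw [h1, ← mul_assoc, ← mul_pow]
    norm_num
  rw [h2, Vd_eq_mul]
  push_cast
  ring


end Aux

theorem stmt0 (n k : ℕ) (f : MvPolynomial (Fin n) ℚ)
    (hf : f.IsHomogeneous k) (hk : k < n - 1) :
    DS n f = 0 := by
  obtain ⟨m, hn⟩ : ∃ m, n = m + 1 := ⟨n - 1, by omega⟩
  set K := FractionRing (MvPolynomial (Fin n) ℚ)
  set A := algebraMap (MvPolynomial (Fin n) ℚ) K with hA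
  have hAinj : Function.Injective A := IsFractionRing.injective _ _
  have hAne : ∀ {p : MvPolynomial (Fin n) ℚ}, p ≠ 0 → A p ≠ 0 := by
    intro p hp
    rw [← map_zero A]
    exact fun h => hp (hAinj h)
  have hterm : ∀ w : Equiv.Perm (Fin n),
      A (rename w f) / A (rename w (denomDS n)) =
      (((-1 : ℤ) ^ (n - 1) * (Equiv.Perm.sign w : ℤ) : ℤ) : K) *
        A (rename w (f * Epoly n)) / A (Vd n) := by
    intro w
    have hE : rename (⇑w) (Epoly n) ≠ 0 := by
      intro h
      exact Epoly_ne_zero n (rename_injective (⇑w) w.injective (by rw [h, map_zero]))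
    have hAE : A (rename (⇑w) (Epoly n)) ≠ 0 := hAne hE
    rw [← mul_div_mul_right (A (rename (⇑w) f)) (A (rename (⇑w) (denomDS n))) hAE,
      ← map_mul, ← map_mul, ← map_mul, ← map_mul, denom_mul_Epoly n m hn]
    have hpoly : (rename ⇑w) ((((-1 : ℤ) ^ (n-1)) : MvPolynomial (Fin n) ℚ) * Vd n) =
        ((((-1 : ℤ) ^ (n - 1) * (Equiv.Perm.sign w : ℤ)) : ℤ) : MvPolynomial (Fin n) ℚ) *
          Vd n := by
      rw [map_mul, rename_Vd n w, map_pow, map_intCast]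
      push_cast
      ring
    rw [hpoly, map_mul A, map_intCast A]
    have hu : ((((-1 : ℤ) ^ (n - 1) * (Equiv.Perm.sign w : ℤ)) : ℤ) : K) *
        ((((-1 : ℤ) ^ (n - 1) * (Equiv.Perm.sign w : ℤ)) : ℤ) : K) = 1 := by
      rw [← Int.cast_mul, mul_mul_mul_comm, ← mul_pow]
      norm_num [Int.units_mul_self]
    rw [aux_div hu]
  rw [DS, Finset.sum_congr rfl fun w _ => hterm w, ← Finset.sum_div]
  have hsum : ∑ w : Equiv.Perm (Fin n),
      (((-1 : ℤ) ^ (n - 1) * (Equiv.Perm.sign w : ℤ) : ℤ) : K) * A (rename w (f * Epoly n)) =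
      A ((((-1 : ℤ) ^ (n - 1) : ℤ) : MvPolynomial (Fin n) ℚ) * Npoly n f) := by
    rw [Npoly, Finset.mul_sum, map_sum]
    apply Finset.sum_congr rfl
    intro w _
    simp only [map_mul, map_intCast]
    rw [Int.cast_mul, Int.cast_pow, Int.cast_neg, Int.cast_one]
    push_cast
    ring
  rw [hsum, Npoly_eq_zero n f k m hf hk hn, mul_zero, map_zero, zero_div]
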